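/- For every complex number z with 0 < Re z < 1 and all real a, a' with 0 < a < 1 and 0 < a' < 1, the line integral ∫_{t ∈ ℝ} f_l(a + t·exp(-iπ/4))·exp(-iπ/4) dt equals ∫_{t ∈ ℝ} f_l(a' + t·exp(-iπ/4))·exp(-iπ/4) dt; that is, the integral of f_l along the line of slope -1 through (a,0) is independent of the choice of a in (0,1). -/

import Mathlib

open MeasureTheory

/-- The left integrand `f_l(w) = w^(-z)·exp(-πi w²)/(exp(πi w) - exp(-πi w))`. -/
noncomputable def fl (z w : ℂ) : ℂ :=
  w ^ (-z) * Complex.exp (-(Real.pi * Complex.I) * w ^ 2) /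
    (Complex.exp (Real.pi * Complex.I * w) - Complex.exp (-(Real.pi * Complex.I) * w))


open Complex Filter


noncomputable def eps : ℂ := ((Real.sqrt 2 / 2 : ℝ) : ℂ) * (1 - Complex.I)

lemma sqrt2_sq_c : ((Real.sqrt 2 : ℝ) : ℂ) ^ 2 = 2 := by
  rw [← Complex.ofReal_pow, Real.sq_sqrt (by norm_num : (0:ℝ) ≤ 2)]; norm_num

lemma exp_eq_eps : Complex.exp (-(Real.pi * Complex.I) / 4) = eps := by
  have h : -((Real.pi : ℂ) * Complex.I) / 4 = ((-(Real.pi/4) : ℝ) : ℂ) * Complex.I := by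
    push_cast; ring
  rw [h, Complex.exp_mul_I, ← Complex.ofReal_cos, ← Complex.ofReal_sin,
    Real.cos_neg, Real.sin_neg, Real.cos_pi_div_four, Real.sin_pi_div_four, eps]
  push_cast; ring

lemma eps_sq : eps ^ 2 = -Complex.I := by
  simp only [eps]
  push_cast
  ring_nf
  rw [Complex.I_sq]
  linear_combination (-Complex.I/2) * sqrt2_sq_c

lemma abs_eps : ‖eps‖ = 1 := by
  rw [← exp_eq_eps, Complex.norm_exp]; simp

lemma re_eps_mul (u : ℂ) : (eps * u).re = Real.sqrt 2 / 2 * (u.re + u.im) := by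
  simp [eps, Complex.mul_re, Complex.mul_im, Complex.sub_re, Complex.sub_im]; ring

lemma im_eps_mul (u : ℂ) : (eps * u).im = Real.sqrt 2 / 2 * (u.im - u.re) := by
  simp [eps, Complex.mul_re, Complex.mul_im, Complex.sub_re, Complex.sub_im]; ring


lemma den_ne (w : ℂ) (hw : ∀ n : ℤ, w ≠ (n : ℂ)) :
    Complex.exp (Real.pi * Complex.I * w) - Complex.exp (-(Real.pi * Complex.I) * w) ≠ 0 := by
  intro h
  obtain ⟨n, hn⟩ := Complex.exp_eq_exp_iff_exists_int.mp (sub_eq_zero.mp h)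
  have hpi : (Real.pi : ℂ) ≠ 0 := by exact_mod_cast Real.pi_ne_zero
  apply hw n
  have h2 : (2 * (Real.pi:ℂ) * Complex.I) * w = (2 * (Real.pi:ℂ) * Complex.I) * n := by
    linear_combination hn
  exact mul_left_cancel₀ (by simp [hpi, Complex.I_ne_zero]) h2

lemma fl_diff (z w : ℂ) (hw : w ∈ Complex.slitPlane)
    (hden : Complex.exp (Real.pi * Complex.I * w) - Complex.exp (-(Real.pi * Complex.I) * w) ≠ 0) :
    DifferentiableAt ℂ (fl z) w := by
  unfold fl
  apply DifferentiableAt.div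
  · exact (differentiableAt_fun_id.cpow (differentiableAt_const _) hw).mul
      (((differentiableAt_const _).mul ((differentiableAt_fun_id.pow 2))).cexp)
  · exact (((differentiableAt_const _).mul differentiableAt_fun_id).cexp).sub
      (((differentiableAt_const _).mul differentiableAt_fun_id).cexp)
  · exact hden
lemma strip_props {b b' : ℝ} (hb : 0 < b) (hb' : Real.sqrt 2 * b' < 1) {u : ℂ}
    (h1 : b ≤ u.im) (h2 : u.im ≤ b') :
    eps * u ∈ Complex.slitPlane ∧ ∀ n : ℤ, eps * u ≠ (n : ℂ) := by
  have hs : 0 < Real.sqrt 2 / 2 := by positivity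
  have hs2 : Real.sqrt 2 * Real.sqrt 2 = 2 := Real.mul_self_sqrt (by norm_num)
  constructor
  · rw [Complex.mem_slitPlane_iff]
    by_cases h : u.re = u.im
    · left; rw [re_eps_mul, h]; nlinarith
    · right; rw [im_eps_mul]; intro hc
      apply h; nlinarith [mul_eq_zero.mp hc]
  · intro n hn
    rw [Complex.ext_iff] at hn
    have hnim : (eps*u).im = 0 := by rw [hn.2]; simp
    have hnre : (eps*u).re = (n : ℝ) := by rw [hn.1]; simp
    rw [im_eps_mul] at hnim
    have hre : u.re = u.im := by
      rcases mul_eq_zero.mp hnim with h | h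
      · exact absurd h (ne_of_gt hs)
      · linarith
    rw [re_eps_mul, hre] at hnre
    have hpos : (0:ℝ) < n := by rw [← hnre]; nlinarith
    have hlt : (n:ℝ) < 1 := by
      rw [← hnre]
      have : Real.sqrt 2 / 2 * (u.im + u.im) = Real.sqrt 2 * u.im := by ring
      rw [this]
      calc Real.sqrt 2 * u.im ≤ Real.sqrt 2 * b' := by
            apply mul_le_mul_of_nonneg_left h2 (by positivity)
        _ < 1 := hb'
    have h1n : (1:ℤ) ≤ n := Int.cast_pos.mp hpos
    have : (1:ℝ) ≤ (n:ℝ) := by exact_mod_cast h1n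
    linarith

lemma den_ge_one (w : ℂ) (h : 1 ≤ |w.im|) :
    1 ≤ ‖Complex.exp (Real.pi * Complex.I * w) - Complex.exp (-(Real.pi * Complex.I) * w)‖ := by
  have hA : ‖Complex.exp ((Real.pi:ℂ) * Complex.I * w)‖ = Real.exp (-(Real.pi * w.im)) := by
    rw [Complex.norm_exp]; congr 1
    simp [Complex.mul_re, Complex.mul_im]
  have hB : ‖Complex.exp (-((Real.pi:ℂ) * Complex.I) * w)‖ = Real.exp (Real.pi * w.im) := by
    rw [Complex.norm_exp]; congr 1
    simp [Complex.mul_re, Complex.mul_im]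
  have hpi : 3 < Real.pi := Real.pi_gt_three
  rcases le_or_gt 0 w.im with him | him
  · have h1 : 1 ≤ w.im := by rwa [_root_.abs_of_nonneg him] at h
    have hae := Real.add_one_le_exp Real.pi
    have hexpm : Real.exp Real.pi ≤ Real.exp (Real.pi * w.im) := Real.exp_le_exp.mpr (by nlinarith)
    have hexp : 1 + Real.pi ≤ Real.exp (Real.pi * w.im) := by linarith
    have hexp2 : Real.exp (-(Real.pi * w.im)) ≤ 1 := Real.exp_le_one_iff.mpr (by nlinarith)
    calc (1:ℝ) ≤ Real.exp (Real.pi * w.im) - Real.exp (-(Real.pi * w.im)) := by linarith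
      _ = ‖Complex.exp (-((Real.pi:ℂ) * Complex.I) * w)‖ - ‖Complex.exp ((Real.pi:ℂ) * Complex.I * w)‖ := by rw [hA, hB]
      _ ≤ ‖Complex.exp (Real.pi * Complex.I * w) - Complex.exp (-(Real.pi * Complex.I) * w)‖ := by
          rw [norm_sub_rev]; exact norm_sub_norm_le _ _
  · have h1 : w.im ≤ -1 := by rw [_root_.abs_of_neg him] at h; linarith
    have hae := Real.add_one_le_exp Real.pi
    have hexpm : Real.exp Real.pi ≤ Real.exp (-(Real.pi * w.im)) := Real.exp_le_exp.mpr (by nlinarith)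
    have hexp : 1 + Real.pi ≤ Real.exp (-(Real.pi * w.im)) := by linarith
    have hexp2 : Real.exp (Real.pi * w.im) ≤ 1 := Real.exp_le_one_iff.mpr (by nlinarith)
    calc (1:ℝ) ≤ Real.exp (-(Real.pi * w.im)) - Real.exp (Real.pi * w.im) := by linarith
      _ = ‖Complex.exp ((Real.pi:ℂ) * Complex.I * w)‖ - ‖Complex.exp (-((Real.pi:ℂ) * Complex.I) * w)‖ := by rw [hA, hB]
      _ ≤ ‖Complex.exp (Real.pi * Complex.I * w) - Complex.exp (-(Real.pi * Complex.I) * w)‖ :=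
          norm_sub_norm_le _ _

lemma cpow_norm_le (z w : ℂ) (hz : 0 ≤ z.re) {b : ℝ} (hb : 0 < b) (hw : b ≤ ‖w‖) :
    ‖w ^ (-z)‖ ≤ b ^ (-z.re) * Real.exp (Real.pi * |z.im|) := by
  have hw0 : w ≠ 0 := by
    intro h; rw [h] at hw; simp at hw; linarith
  rw [Complex.norm_cpow_of_ne_zero hw0]
  simp only [Complex.neg_re, Complex.neg_im]
  rw [div_eq_mul_inv, ← Real.exp_neg]
  have h1 : ‖w‖ ^ (-z.re) ≤ b ^ (-z.re) :=
    Real.rpow_le_rpow_of_nonpos hb hw (neg_nonpos.mpr hz)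
  have h2 : Real.exp (-(w.arg * -z.im)) ≤ Real.exp (Real.pi * |z.im|) := by
    apply Real.exp_le_exp.mpr
    calc -(w.arg * -z.im) = w.arg * z.im := by ring
      _ ≤ |w.arg * z.im| := le_abs_self _
      _ = |w.arg| * |z.im| := abs_mul _ _
      _ ≤ Real.pi * |z.im| := by
          apply mul_le_mul_of_nonneg_right (Complex.abs_arg_le_pi w) (abs_nonneg _)
  exact mul_le_mul h1 h2 (Real.exp_pos _).le (by positivity)

lemma F_diffAt (z : ℂ) {b b' : ℝ} (hb : 0 < b) (hb' : Real.sqrt 2 * b' < 1) {u : ℂ}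
    (h1 : b ≤ u.im) (h2 : u.im ≤ b') :
    DifferentiableAt ℂ (fun v => fl z (eps * v) * eps) u := by
  obtain ⟨hsp, hint⟩ := strip_props hb hb' h1 h2
  exact (((fl_diff z (eps * u) hsp (den_ne _ hint)).comp u
    ((differentiableAt_const eps).mul differentiableAt_fun_id)).mul_const eps)

set_option maxHeartbeats 1000000 in
lemma F_bound (z : ℂ) (hz0 : 0 ≤ z.re) {b b' : ℝ} (hb : 0 < b) (hbb : b ≤ b')
    (hb' : Real.sqrt 2 * b' < 1) :
    ∃ C : ℝ, ∀ u : ℂ, b ≤ u.im → u.im ≤ b' →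
      ‖fl z (eps * u) * eps‖ ≤ C * Real.exp (-Real.pi * u.re ^ 2) := by
  have hs1 : (1:ℝ) ≤ Real.sqrt 2 := by
    nlinarith [Real.sq_sqrt (by norm_num : (0:ℝ) ≤ 2), Real.sqrt_nonneg 2]
  have hb'0 : 0 < b' := lt_of_lt_of_le hb hbb
  obtain ⟨X₀, hX₀def⟩ : ∃ x : ℝ, x = b' + 2 := ⟨_, rfl⟩
  have hX₀ : 0 < X₀ := by rw [hX₀def]; linarith
  obtain ⟨C₁, hC₁⟩ : ∃ c : ℝ, c = b ^ (-z.re) * Real.exp (Real.pi * |z.im|) * Real.exp (Real.pi * b'^2) := ⟨_, rfl⟩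
  have hC₁0 : 0 ≤ C₁ := by rw [hC₁]; positivity
  have hnum : ∀ u : ℂ, b ≤ u.im → u.im ≤ b' →
      ‖(eps*u) ^ (-z) * Complex.exp (-((Real.pi:ℂ) * Complex.I) * (eps*u)^2)‖
        ≤ C₁ * Real.exp (-Real.pi * u.re^2) := by
    intro u h1 h2
    rw [norm_mul]
    have habs : b ≤ ‖eps * u‖ := by
      rw [norm_mul, abs_eps, one_mul]
      calc b ≤ u.im := h1
        _ ≤ |u.im| := le_abs_self _
        _ ≤ ‖u‖ := Complex.abs_im_le_norm u
    have hcp := cpow_norm_le z (eps*u) hz0 hb habs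
    have hexp_eq : -((Real.pi:ℂ) * Complex.I) * (eps*u)^2 = (-(Real.pi:ℂ)) * u^2 := by
      rw [mul_pow, eps_sq]
      linear_combination (Real.pi:ℂ) * u^2 * Complex.I_sq
    have hre : ((-(Real.pi:ℂ)) * u^2).re = -Real.pi * (u.re^2 - u.im^2) := by
      simp [pow_two, Complex.mul_re, Complex.mul_im]
    have hexp : ‖Complex.exp (-((Real.pi:ℂ) * Complex.I) * (eps*u)^2)‖
        ≤ Real.exp (Real.pi * b'^2) * Real.exp (-Real.pi * u.re^2) := by
      rw [hexp_eq, Complex.norm_exp, hre, ← Real.exp_add]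
      apply Real.exp_le_exp.mpr
      have himsq : u.im^2 ≤ b'^2 := by nlinarith
      nlinarith [Real.pi_pos, himsq]
    calc ‖(eps*u) ^ (-z)‖ * ‖Complex.exp (-((Real.pi:ℂ) * Complex.I) * (eps*u)^2)‖
        ≤ (b ^ (-z.re) * Real.exp (Real.pi * |z.im|)) *
            (Real.exp (Real.pi * b'^2) * Real.exp (-Real.pi * u.re^2)) :=
          mul_le_mul hcp hexp (norm_nonneg _) (by positivity)
      _ = C₁ * Real.exp (-Real.pi * u.re^2) := by rw [hC₁]; ring
  set K : Set ℂ := (fun p : ℝ × ℝ => (p.1 : ℂ) + (p.2 : ℝ) * Complex.I) ''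
      (Set.Icc (-X₀) X₀ ×ˢ Set.Icc b b') with hK
  have hKc : IsCompact K := (isCompact_Icc.prod isCompact_Icc).image (by continuity)
  have hmem : ∀ u ∈ K, b ≤ u.im ∧ u.im ≤ b' := by
    rintro u ⟨⟨x, y⟩, ⟨hx, hy⟩, rfl⟩
    have him : ((x:ℂ) + (y:ℂ)*Complex.I).im = y := by simp
    rw [him]
    exact ⟨hy.1, hy.2⟩
  have hcont : ContinuousOn (fun v => fl z (eps * v) * eps) K := fun u hu =>
    ((F_diffAt z hb hb' (hmem u hu).1 (hmem u hu).2).continuousAt).continuousWithinAt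
  obtain ⟨M, hM⟩ := hKc.exists_bound_of_continuousOn hcont
  have hbK : ((0:ℝ):ℂ) + (b:ℂ)*Complex.I ∈ K := by
    refine ⟨(0, b), ⟨⟨?_, ?_⟩, ⟨le_refl b, hbb⟩⟩, rfl⟩
    · show -X₀ ≤ (0:ℝ)
      rw [hX₀def]; linarith
    · show (0:ℝ) ≤ X₀
      linarith
  have hM0 : 0 ≤ M := le_trans (norm_nonneg _) (hM _ hbK)
  refine ⟨C₁ + M * Real.exp (Real.pi * X₀^2), ?_⟩
  intro u h1 h2
  have hepos : 0 < Real.exp (-Real.pi * u.re^2) := Real.exp_pos _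
  have hflrw : ‖fl z (eps*u) * eps‖ =
      ‖(eps*u) ^ (-z) * Complex.exp (-((Real.pi:ℂ) * Complex.I) * (eps*u)^2)‖ /
      ‖Complex.exp ((Real.pi:ℂ) * Complex.I * (eps*u)) - Complex.exp (-((Real.pi:ℂ) * Complex.I) * (eps*u))‖ := by
    rw [norm_mul, abs_eps, mul_one]
    unfold fl
    rw [norm_div]
  rcases le_or_gt X₀ |u.re| with hcase | hcase
  · have h4 : |u.im| ≤ b' := by rw [_root_.abs_of_nonneg (le_trans hb.le h1)]; exact h2
    have h5 : |u.re| - |u.im| ≤ |u.re - u.im| := abs_sub_abs_le_abs_sub _ _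
    have h3 : 2 ≤ |u.im - u.re| := by rw [abs_sub_comm]; linarith
    have him : 1 ≤ |(eps*u).im| := by
      rw [im_eps_mul, abs_mul, _root_.abs_of_nonneg (by positivity : (0:ℝ) ≤ Real.sqrt 2 / 2)]
      nlinarith [mul_le_mul_of_nonneg_left h3 (by positivity : (0:ℝ) ≤ Real.sqrt 2/2)]
    have hden := den_ge_one (eps*u) him
    rw [hflrw]
    calc _ ≤ ‖(eps*u) ^ (-z) * Complex.exp (-((Real.pi:ℂ) * Complex.I) * (eps*u)^2)‖ :=
          div_le_self (norm_nonneg _) hden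
      _ ≤ C₁ * Real.exp (-Real.pi * u.re^2) := hnum u h1 h2
      _ ≤ (C₁ + M * Real.exp (Real.pi * X₀^2)) * Real.exp (-Real.pi * u.re^2) := by
          have : 0 ≤ M * Real.exp (Real.pi * X₀^2) := by positivity
          nlinarith
  · have habs := abs_lt.mp hcase
    have huK : u ∈ K :=
      ⟨(u.re, u.im), ⟨⟨habs.1.le, habs.2.le⟩, ⟨h1, h2⟩⟩, Complex.re_add_im u⟩
    have h6 := hM u huK
    have h7 : u.re^2 ≤ X₀^2 := by nlinarith [habs.1, habs.2, hX₀]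
    have h8 : 1 ≤ Real.exp (Real.pi * X₀^2) * Real.exp (-Real.pi * u.re^2) := by
      rw [← Real.exp_add]
      have hnn : (0:ℝ) ≤ Real.pi * X₀^2 + -Real.pi * u.re^2 := by nlinarith [Real.pi_pos]
      calc (1:ℝ) = Real.exp 0 := Real.exp_zero.symm
        _ ≤ Real.exp (Real.pi * X₀^2 + -Real.pi * u.re^2) := Real.exp_le_exp.mpr hnn
    calc ‖fl z (eps*u) * eps‖ ≤ M := h6
      _ ≤ M * (Real.exp (Real.pi * X₀^2) * Real.exp (-Real.pi * u.re^2)) := le_mul_of_one_le_right hM0 h8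
      _ = M * Real.exp (Real.pi * X₀^2) * Real.exp (-Real.pi * u.re^2) := by ring
      _ ≤ (C₁ + M * Real.exp (Real.pi * X₀^2)) * Real.exp (-Real.pi * u.re^2) := by nlinarith

lemma F_integrable (z : ℂ) (hz0 : 0 ≤ z.re) {b b' c : ℝ} (hb : 0 < b) (hbb : b ≤ b')
    (hb' : Real.sqrt 2 * b' < 1) (hc1 : b ≤ c) (hc2 : c ≤ b') :
    Integrable (fun t : ℝ => fl z (eps * ((t : ℂ) + (c : ℂ) * Complex.I)) * eps) := by
  obtain ⟨C, hC⟩ := F_bound z hz0 hb hbb hb'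
  have hcont : Continuous (fun t : ℝ => fl z (eps * ((t : ℂ) + (c : ℂ) * Complex.I)) * eps) := by
    rw [continuous_iff_continuousAt]
    intro t
    have him : ((t : ℂ) + (c : ℂ) * Complex.I).im = c := by simp
    have hd := F_diffAt z hb hb' (u := (t : ℂ) + (c : ℂ) * Complex.I)
      (by rw [him]; exact hc1) (by rw [him]; exact hc2)
    have hg : ContinuousAt (fun s : ℝ => (s : ℂ) + (c : ℂ) * Complex.I) t := by fun_prop
    have h2 := ContinuousAt.comp (x := t)
      (f := fun s : ℝ => (s : ℂ) + (c : ℂ) * Complex.I) hd.continuousAt hg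
    exact h2
  apply Integrable.mono' ((integrable_exp_neg_mul_sq Real.pi_pos).const_mul C)
    hcont.aestronglyMeasurable
  refine Filter.Eventually.of_forall (fun t => ?_)
  have him : ((t : ℂ) + (c : ℂ) * Complex.I).im = c := by simp
  have hre : ((t : ℂ) + (c : ℂ) * Complex.I).re = t := by simp
  have := hC ((t : ℂ) + (c : ℂ) * Complex.I) (by rw [him]; exact hc1) (by rw [him]; exact hc2)
  rw [hre] at this
  simpa [neg_mul] using this

lemma line_integral_shift (z : ℂ) (hz0 : 0 ≤ z.re) {b b' : ℝ} (hb : 0 < b) (hbb : b ≤ b')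
    (hb' : Real.sqrt 2 * b' < 1) :
    (∫ t : ℝ, fl z (eps * ((t : ℂ) + (b : ℂ) * Complex.I)) * eps) =
    (∫ t : ℝ, fl z (eps * ((t : ℂ) + (b' : ℂ) * Complex.I)) * eps) := by
  set f : ℂ → ℂ := fun v => fl z (eps * v) * eps with hf
  have hint_b : Integrable (fun t : ℝ => f ((t:ℂ) + (b:ℂ)*Complex.I)) :=
    F_integrable z hz0 hb hbb hb' le_rfl hbb
  have hint_b' : Integrable (fun t : ℝ => f ((t:ℂ) + (b':ℂ)*Complex.I)) :=
    F_integrable z hz0 hb hbb hb' hbb le_rfl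
  obtain ⟨C, hC⟩ := F_bound z hz0 hb hbb hb'
  -- rectangle identity
  have key : ∀ R : ℝ,
      ((∫ x : ℝ in (-R)..R, f ((x:ℂ) + (b:ℂ)*Complex.I)) -
       (∫ x : ℝ in (-R)..R, f ((x:ℂ) + (b':ℂ)*Complex.I))) =
      Complex.I • (∫ y : ℝ in b..b', f (((-R : ℝ):ℂ) + (y:ℂ)*Complex.I)) -
      Complex.I • (∫ y : ℝ in b..b', f (((R : ℝ):ℂ) + (y:ℂ)*Complex.I)) := by
    intro R
    have hdo : DifferentiableOn ℂ f
        (Set.uIcc (((-R : ℝ):ℂ) + (b:ℂ)*Complex.I).re (((R : ℝ):ℂ) + (b':ℂ)*Complex.I).re ×ℂ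
         Set.uIcc (((-R : ℝ):ℂ) + (b:ℂ)*Complex.I).im (((R : ℝ):ℂ) + (b':ℂ)*Complex.I).im) := by
      intro u hu
      rw [Complex.mem_reProdIm] at hu
      have him : u.im ∈ Set.uIcc b b' := by simpa using hu.2
      rw [Set.uIcc_of_le hbb] at him
      exact (F_diffAt z hb hb' him.1 him.2).differentiableWithinAt
    have hrect := Complex.integral_boundary_rect_eq_zero_of_differentiableOn f
      (((-R : ℝ):ℂ) + (b:ℂ)*Complex.I) (((R : ℝ):ℂ) + (b':ℂ)*Complex.I) hdo
    have hre1 : (((-R : ℝ):ℂ) + (b:ℂ)*Complex.I).re = -R := by simp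
    have hre2 : (((R : ℝ):ℂ) + (b':ℂ)*Complex.I).re = R := by simp
    have him1 : (((-R : ℝ):ℂ) + (b:ℂ)*Complex.I).im = b := by simp
    have him2 : (((R : ℝ):ℂ) + (b':ℂ)*Complex.I).im = b' := by simp
    rw [hre1, hre2, him1, him2] at hrect
    linear_combination hrect
  -- horizontal limits
  have hker : Filter.Tendsto (fun R : ℝ =>
      (∫ x : ℝ in (-R)..R, f ((x:ℂ) + (b:ℂ)*Complex.I)) -
      (∫ x : ℝ in (-R)..R, f ((x:ℂ) + (b':ℂ)*Complex.I))) Filter.atTop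
      (nhds ((∫ t : ℝ, f ((t:ℂ) + (b:ℂ)*Complex.I)) - ∫ t : ℝ, f ((t:ℂ) + (b':ℂ)*Complex.I))) :=
    (intervalIntegral_tendsto_integral hint_b tendsto_neg_atTop_atBot tendsto_id).sub
      (intervalIntegral_tendsto_integral hint_b' tendsto_neg_atTop_atBot tendsto_id)
  -- vertical limits
  have hvbound : ∀ x : ℝ, ‖Complex.I • ∫ y : ℝ in b..b', f ((x:ℂ) + (y:ℂ)*Complex.I)‖ ≤
      (C * Real.exp (-Real.pi * x^2)) * |b' - b| := by
    intro x
    rw [norm_smul, Complex.norm_I, one_mul]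
    apply intervalIntegral.norm_integral_le_of_norm_le_const
    intro y hy
    rw [Set.uIoc_of_le hbb] at hy
    have him : ((x:ℂ) + (y:ℂ)*Complex.I).im = y := by simp
    have hre : ((x:ℂ) + (y:ℂ)*Complex.I).re = x := by simp
    have := hC ((x:ℂ) + (y:ℂ)*Complex.I) (by rw [him]; exact hy.1.le) (by rw [him]; exact hy.2)
    rw [hre] at this
    exact this
  have hexp0 : Filter.Tendsto (fun R : ℝ => (C * Real.exp (-Real.pi * R^2)) * |b' - b|)
      Filter.atTop (nhds 0) := by
    have h1 : Filter.Tendsto (fun R : ℝ => Real.pi * R^2) Filter.atTop Filter.atTop :=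
      (tendsto_pow_atTop (two_ne_zero)).const_mul_atTop Real.pi_pos
    have h2 : Filter.Tendsto (fun R : ℝ => Real.exp (-(Real.pi * R^2))) Filter.atTop (nhds 0) :=
      Real.tendsto_exp_neg_atTop_nhds_zero.comp h1
    have h3 : Filter.Tendsto (fun R : ℝ => (C * Real.exp (-(Real.pi * R^2))) * |b' - b|)
        Filter.atTop (nhds ((C * 0) * |b' - b|)) := (h2.const_mul C).mul_const _
    simpa [neg_mul] using h3
  have hv1 : Filter.Tendsto (fun R : ℝ =>
      Complex.I • ∫ y : ℝ in b..b', f (((-R : ℝ):ℂ) + (y:ℂ)*Complex.I)) Filter.atTop (nhds 0) := by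
    apply squeeze_zero_norm (fun R => ?_) hexp0
    calc ‖Complex.I • ∫ y : ℝ in b..b', f (((-R : ℝ):ℂ) + (y:ℂ)*Complex.I)‖ ≤
        (C * Real.exp (-Real.pi * (-R)^2)) * |b' - b| := hvbound (-R)
      _ = (C * Real.exp (-Real.pi * R^2)) * |b' - b| := by ring_nf
  have hv2 : Filter.Tendsto (fun R : ℝ =>
      Complex.I • ∫ y : ℝ in b..b', f (((R : ℝ):ℂ) + (y:ℂ)*Complex.I)) Filter.atTop (nhds 0) :=
    squeeze_zero_norm (fun R => hvbound R) hexp0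
  have hrhs : Filter.Tendsto (fun R : ℝ =>
      (∫ x : ℝ in (-R)..R, f ((x:ℂ) + (b:ℂ)*Complex.I)) -
      (∫ x : ℝ in (-R)..R, f ((x:ℂ) + (b':ℂ)*Complex.I))) Filter.atTop (nhds 0) := by
    have := hv1.sub hv2
    rw [sub_zero] at this
    exact Filter.Tendsto.congr (fun R => (key R).symm) this
  have := tendsto_nhds_unique hker hrhs
  exact sub_eq_zero.mp this

lemma rotate_line (z : ℂ) (a : ℝ) (ha : 0 < a) :
    (∫ t : ℝ, fl z ((a:ℂ) + (t:ℂ) * eps) * eps) =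
    (∫ t : ℝ, fl z (eps * ((t:ℂ) + ((a / Real.sqrt 2 : ℝ):ℂ) * Complex.I)) * eps) := by
  have hs0 : (0:ℝ) < Real.sqrt 2 := by positivity
  set c : ℝ := a / Real.sqrt 2 with hc
  have hac : (a:ℂ) = ((Real.sqrt 2 : ℝ):ℂ) * (c:ℂ) := by
    rw [hc]
    push_cast
    field_simp
  have harg : ∀ t : ℝ, (a:ℂ) + (t:ℂ) * eps =
      eps * ((((t + c : ℝ)):ℂ) + ((c:ℝ):ℂ) * Complex.I) := by
    intro t
    rw [hac]
    simp only [eps]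
    push_cast
    linear_combination (((Real.sqrt 2 : ℝ):ℂ)/2 * (c:ℂ)) * Complex.I_sq
  calc (∫ t : ℝ, fl z ((a:ℂ) + (t:ℂ) * eps) * eps)
      = ∫ t : ℝ, fl z (eps * ((((t + c : ℝ)):ℂ) + ((c:ℝ):ℂ) * Complex.I)) * eps := by
        congr 1; funext t; rw [harg t]
    _ = ∫ t : ℝ, fl z (eps * (((t : ℝ):ℂ) + ((c:ℝ):ℂ) * Complex.I)) * eps :=
        integral_add_right_eq_self (fun s : ℝ => fl z (eps * ((s:ℂ) + ((c:ℝ):ℂ) * Complex.I)) * eps) c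

/-- The integral of `f_l` along the line of slope `-1` through `(a,0)`
(direction `exp(-iπ/4)`) does not depend on the crossing point `a ∈ (0,1)`. -/
theorem fl_line_integral_independent (z : ℂ) (h0 : 0 < z.re) (h1 : z.re < 1)
    (a a' : ℝ) (ha0 : 0 < a) (ha1 : a < 1) (ha'0 : 0 < a') (ha'1 : a' < 1) :
    (∫ t : ℝ, fl z (a + t * Complex.exp (-(Real.pi * Complex.I) / 4)) *
        Complex.exp (-(Real.pi * Complex.I) / 4)) =
    (∫ t : ℝ, fl z (a' + t * Complex.exp (-(Real.pi * Complex.I) / 4)) *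
        Complex.exp (-(Real.pi * Complex.I) / 4)) := by
  have hs0 : (0:ℝ) < Real.sqrt 2 := by positivity
  have hmul : ∀ x : ℝ, Real.sqrt 2 * (x / Real.sqrt 2) = x := fun x => by field_simp
  simp only [exp_eq_eps]
  rw [rotate_line z a ha0, rotate_line z a' ha'0]
  rcases le_total (a / Real.sqrt 2) (a' / Real.sqrt 2) with hle | hle
  · exact line_integral_shift z h0.le (by positivity) hle (by rw [hmul]; exact ha'1)
  · exact (line_integral_shift z h0.le (by positivity) hle (by rw [hmul]; exact ha1)).symm
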